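/- Let $\lambda>0$, $0<\beta<\alpha$, $0\leq\gamma<\alpha$, and $T>0$. Then $\sum_{j\in\mathbb{Z}}\int_0^T 2^{\beta j}e^{-\lambda 2^{\alpha j}(T-\tau)}\tau^{-\gamma/\alpha}\,d\tau\leq C\,T^{1-\beta/\alpha-\gamma/\alpha}$ for some constant $C=C(\lambda,\alpha,\beta,\gamma)>0$ independent of $T$. -/

import Mathlib

open MeasureTheory Set

open scoped ENNReal

-- L3: exponential bound
lemma exp_neg_le_rpow {θ x : ℝ} (h0 : 0 < θ) (h1 : θ ≤ 1) (hx : 0 < x) :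
    Real.exp (-x) ≤ x ^ (-θ) := by
  rcases le_or_gt x 1 with h | h
  · calc Real.exp (-x) ≤ 1 := Real.exp_le_one_iff.mpr (by linarith)
    _ ≤ x ^ (-θ) := Real.one_le_rpow_of_pos_of_le_one_of_nonpos hx h (by linarith)
  · have hx1 : (1:ℝ) ≤ x := h.le
    calc Real.exp (-x) = (Real.exp x)⁻¹ := by rw [Real.exp_neg]
    _ ≤ x⁻¹ := by
        apply inv_anti₀ hx
        linarith [Real.add_one_le_exp x]
    _ = x ^ (-1 : ℝ) := by rw [Real.rpow_neg_one]
    _ ≤ x ^ (-θ) := Real.rpow_le_rpow_of_exponent_le hx1 (by linarith)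

-- L1: rpow lintegral
lemma rpow_lintegral {b T : ℝ} (hb0 : 0 ≤ b) (hb1 : b < 1) (hT : 0 < T) :
    ∫⁻ τ in Ioo (0:ℝ) T, ENNReal.ofReal (τ ^ (-b)) =
      ENNReal.ofReal (T ^ (1-b) / (1-b)) := by
  rw [Measure.restrict_congr_set Ioo_ae_eq_Ioc]
  have hb' : (-1:ℝ) < -b := by linarith
  have hint : IntervalIntegrable (fun x : ℝ => x ^ (-b)) volume 0 T :=
    intervalIntegral.intervalIntegrable_rpow' hb'
  have hIoc : IntegrableOn (fun x : ℝ => x ^ (-b)) (Ioc 0 T) volume := by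
    have h := hint.def'
    rwa [uIoc_of_le hT.le] at h
  rw [← ofReal_integral_eq_lintegral_ofReal hIoc]
  · congr 1
    have : ∫ x in Ioc (0:ℝ) T, x ^ (-b) = ∫ x in (0:ℝ)..T, x ^ (-b) := by
      rw [intervalIntegral.integral_of_le hT.le]
    rw [this, integral_rpow (Or.inl hb')]
    rw [Real.zero_rpow (by linarith : -b + 1 ≠ 0)]
    ring_nf
  · filter_upwards [ae_restrict_mem measurableSet_Ioc] with x hx
    exact Real.rpow_nonneg (le_of_lt hx.1) _

lemma lint_ofReal_const_mul {c : ℝ} (hc : 0 ≤ c) (f : ℝ → ℝ) (s : Set ℝ) :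
    ∫⁻ τ in s, ENNReal.ofReal (c * f τ) = ENNReal.ofReal c * ∫⁻ τ in s, ENNReal.ofReal (f τ) := by
  simp_rw [ENNReal.ofReal_mul hc]
  exact lintegral_const_mul' _ _ ENNReal.ofReal_ne_top

-- geometric sum
lemma geo_tsum {c q : ℝ} (hc : 0 ≤ c) (hq0 : 0 ≤ q) (hq1 : q < 1) :
    ∑' n : ℕ, ENNReal.ofReal (c * q ^ n) = ENNReal.ofReal (c / (1 - q)) := by
  have h1 : ∀ n : ℕ, ENNReal.ofReal (c * q ^ n) =
      ENNReal.ofReal c * (ENNReal.ofReal q) ^ n := by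
    intro n
    rw [ENNReal.ofReal_mul hc, ENNReal.ofReal_pow hq0]
  simp_rw [h1]
  rw [ENNReal.tsum_mul_left, ENNReal.tsum_geometric]
  have h2 : (1 : ℝ≥0∞) - ENNReal.ofReal q = ENNReal.ofReal (1 - q) := by
    rw [← ENNReal.ofReal_one, ← ENNReal.ofReal_sub _ hq0]
  rw [h2, ← ENNReal.ofReal_inv_of_pos (by linarith), ← ENNReal.ofReal_mul hc,
    div_eq_mul_inv]

-- L2 : beta-type integral bound
lemma beta_bound {a b T : ℝ} (ha0 : 0 ≤ a) (ha1 : a < 1) (hb0 : 0 ≤ b) (hb1 : b < 1)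
    (hT : 0 < T) :
    ∫⁻ τ in Ioo (0:ℝ) T, ENNReal.ofReal ((T - τ) ^ (-a) * τ ^ (-b)) ≤
      ENNReal.ofReal ((2 / (1 - a) + 2 / (1 - b)) * T ^ (1 - a - b)) := by
  have hT2 : 0 < T / 2 := by linarith
  have hsub : Ioo (0:ℝ) T ⊆ Ioo 0 (T/2) ∪ Ico (T/2) T := by
    intro x hx
    rcases lt_or_ge x (T/2) with h | h
    · exact Or.inl ⟨hx.1, h⟩
    · exact Or.inr ⟨h, hx.2⟩
  calc ∫⁻ τ in Ioo (0:ℝ) T, ENNReal.ofReal ((T - τ) ^ (-a) * τ ^ (-b))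
      ≤ ∫⁻ τ in Ioo (0:ℝ) (T/2) ∪ Ico (T/2) T,
          ENNReal.ofReal ((T - τ) ^ (-a) * τ ^ (-b)) := lintegral_mono_set hsub
    _ ≤ (∫⁻ τ in Ioo (0:ℝ) (T/2), ENNReal.ofReal ((T - τ) ^ (-a) * τ ^ (-b)))
        + ∫⁻ τ in Ico (T/2) T, ENNReal.ofReal ((T - τ) ^ (-a) * τ ^ (-b)) :=
        lintegral_union_le _ _ _
    _ ≤ ENNReal.ofReal ((T/2) ^ (1 - a - b) / (1 - b))
        + ENNReal.ofReal ((T/2) ^ (1 - a - b) / (1 - a)) := by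
        gcongr
        · -- piece 1
          have h1 : ∫⁻ τ in Ioo (0:ℝ) (T/2), ENNReal.ofReal ((T - τ) ^ (-a) * τ ^ (-b)) ≤
              ∫⁻ τ in Ioo (0:ℝ) (T/2), ENNReal.ofReal ((T/2) ^ (-a) * τ ^ (-b)) := by
            apply setLIntegral_mono' measurableSet_Ioo
            intro x hx
            apply ENNReal.ofReal_le_ofReal
            apply mul_le_mul_of_nonneg_right _ (Real.rpow_nonneg hx.1.le _)
            exact Real.rpow_le_rpow_of_nonpos hT2 (by linarith [hx.2]) (by linarith)
          refine h1.trans ?_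
          rw [lint_ofReal_const_mul (Real.rpow_nonneg hT2.le _),
            rpow_lintegral hb0 hb1 hT2, ← ENNReal.ofReal_mul (Real.rpow_nonneg hT2.le _)]
          apply ENNReal.ofReal_le_ofReal
          rw [← mul_div_assoc, ← Real.rpow_add hT2]
          apply le_of_eq
          congr 1
          ring_nf
        · -- piece 2
          have h1 : ∫⁻ τ in Ico (T/2) T, ENNReal.ofReal ((T - τ) ^ (-a) * τ ^ (-b)) ≤
              ∫⁻ τ in Ico (T/2) T, ENNReal.ofReal ((T/2) ^ (-b) * (T - τ) ^ (-a)) := by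
            apply setLIntegral_mono' measurableSet_Ico
            intro x hx
            apply ENNReal.ofReal_le_ofReal
            rw [mul_comm]
            apply mul_le_mul_of_nonneg_right _ (Real.rpow_nonneg (by linarith [hx.2, hx.1] : (0:ℝ) ≤ T - x) _)
            exact Real.rpow_le_rpow_of_nonpos hT2 hx.1 (by linarith)
          refine h1.trans ?_
          rw [lint_ofReal_const_mul (Real.rpow_nonneg hT2.le _)]
          have h2 : ∫⁻ τ in Ico (T/2) T, ENNReal.ofReal ((T - τ) ^ (-a)) =
              ∫⁻ s in Ioc (0:ℝ) (T/2), ENNReal.ofReal (s ^ (-a)) := by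
            have hpre : (fun τ : ℝ => T - τ) ⁻¹' (Ioc (0:ℝ) (T/2)) = Ico (T/2) T := by
              ext x
              simp only [mem_preimage, mem_Ioc, mem_Ico]
              constructor
              · rintro ⟨h1', h2'⟩; constructor <;> linarith
              · rintro ⟨h1', h2'⟩; constructor <;> linarith
            have := (Measure.measurePreserving_sub_left (volume : Measure ℝ) T).setLIntegral_comp_preimage_emb
              (MeasurableEquiv.subLeft T).measurableEmbedding
              (fun s => ENNReal.ofReal (s ^ (-a))) (Ioc (0:ℝ) (T/2))
            rw [hpre] at this
            exact this
          rw [h2, ← Measure.restrict_congr_set Ioo_ae_eq_Ioc,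
            rpow_lintegral ha0 ha1 hT2, ← ENNReal.ofReal_mul (Real.rpow_nonneg hT2.le _)]
          apply ENNReal.ofReal_le_ofReal
          rw [← mul_div_assoc, ← Real.rpow_add hT2]
          apply le_of_eq
          congr 1
          ring_nf
    _ ≤ ENNReal.ofReal ((2 / (1 - a) + 2 / (1 - b)) * T ^ (1 - a - b)) := by
        have hb' : 0 < 1 - b := by linarith
        have ha' : 0 < 1 - a := by linarith
        rw [← ENNReal.ofReal_add
          (div_nonneg (Real.rpow_nonneg hT2.le _) hb'.le)
          (div_nonneg (Real.rpow_nonneg hT2.le _) ha'.le)]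
        apply ENNReal.ofReal_le_ofReal
        have h2 : (T/2) ^ (1 - a - b) ≤ 2 * T ^ (1 - a - b) := by
          rw [Real.div_rpow hT.le (by norm_num)]
          have h3 : (1:ℝ)/2 ≤ 2 ^ (1 - a - b) := by
            have h4 : (2:ℝ) ^ (-1 : ℝ) ≤ 2 ^ (1 - a - b) :=
              Real.rpow_le_rpow_of_exponent_le one_le_two (by linarith)
            rw [Real.rpow_neg_one] at h4
            linarith
          calc T ^ (1-a-b) / 2 ^ (1-a-b) ≤ T ^ (1-a-b) / (1/2) :=
                div_le_div_of_nonneg_left (Real.rpow_nonneg hT.le _) (by norm_num) h3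
            _ = 2 * T ^ (1-a-b) := by ring
        calc (T/2) ^ (1 - a - b) / (1 - b) + (T/2) ^ (1 - a - b) / (1 - a)
            ≤ 2 * T ^ (1 - a - b) / (1 - b) + 2 * T ^ (1 - a - b) / (1 - a) := by
              gcongr
          _ = (2 / (1 - a) + 2 / (1 - b)) * T ^ (1 - a - b) := by
              field_simp
              ring

/-- Summed dyadic integral bound (2.13.8.1): for `λ > 0`, `0 < β < α`, `0 ≤ γ < α`,
`∑_{j∈ℤ} ∫_0^T 2^{βj} e^{-λ2^{αj}(T-τ)} τ^{-γ/α} dτ ≤ C T^{1-β/α-γ/α}`. -/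
theorem stmt5 (lam α β γ : ℝ) (hlam : 0 < lam) (hβ0 : 0 < β) (hβα : β < α)
    (hγ0 : 0 ≤ γ) (hγα : γ < α) :
    ∃ C : ℝ, 0 < C ∧ ∀ T : ℝ, 0 < T →
      (∑' j : ℤ, ∫⁻ τ in Ioo (0:ℝ) T,
          ENNReal.ofReal ((2:ℝ) ^ (β * (j:ℝ)) *
            Real.exp (-(lam * (2:ℝ) ^ (α * (j:ℝ)) * (T - τ))) * τ ^ (-(γ / α)))) ≤
        ENNReal.ofReal (C * T ^ (1 - β / α - γ / α)) := by
  have hα : 0 < α := hβ0.trans hβα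
  set θ : ℝ := (1 + β/α)/2 with hθdef
  have hβα' : β/α < 1 := (div_lt_one hα).mpr hβα
  have hβα0 : 0 < β/α := div_pos hβ0 hα
  have hθ0 : 0 < θ := by rw [hθdef]; linarith
  have hθ1 : θ < 1 := by rw [hθdef]; linarith
  have hθβ : β/α < θ := by rw [hθdef]; linarith
  have hαθ : α * θ = (α + β)/2 := by rw [hθdef]; field_simp
  have hδ : β - α * θ < 0 := by rw [hαθ]; linarith
  have hb0 : 0 ≤ γ/α := div_nonneg hγ0 hα.le
  have hb1 : γ/α < 1 := (div_lt_one hα).mpr hγα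
  have hq1 : (2:ℝ) ^ (-β) < 1 := Real.rpow_lt_one_of_one_lt_of_neg one_lt_two (by linarith)
  have hq1' : (0:ℝ) < 2 ^ (-β) := Real.rpow_pos_of_pos two_pos _
  have hq2 : (2:ℝ) ^ (β - α*θ) < 1 := Real.rpow_lt_one_of_one_lt_of_neg one_lt_two hδ
  have hq2' : (0:ℝ) < 2 ^ (β - α*θ) := Real.rpow_pos_of_pos two_pos _
  have hCb : 0 < 2/(1-θ) + 2/(1-γ/α) :=
    add_pos (div_pos two_pos (by linarith)) (div_pos two_pos (by linarith))
  refine ⟨((1-γ/α)*(1-2^(-β)))⁻¹ + lam^(-θ) * (2/(1-θ) + 2/(1-γ/α)) / (1-2^(β-α*θ)),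
    add_pos (inv_pos.mpr (mul_pos (by linarith) (by linarith)))
      (div_pos (mul_pos (Real.rpow_pos_of_pos hlam _) hCb) (by linarith)), ?_⟩
  intro T hT
  set M : ℤ → ENNReal := fun j => ∫⁻ τ in Ioo (0:ℝ) T,
      ENNReal.ofReal ((2:ℝ) ^ (β * (j:ℝ)) *
        Real.exp (-(lam * (2:ℝ) ^ (α * (j:ℝ)) * (T - τ))) * τ ^ (-(γ / α))) with hM
  -- small bound
  have hsmall : ∀ j : ℤ, M j ≤
      ENNReal.ofReal ((2:ℝ) ^ (β * (j:ℝ)) * (T ^ (1-γ/α) / (1-γ/α))) := by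
    intro j
    have step : M j ≤ ∫⁻ τ in Ioo (0:ℝ) T,
        ENNReal.ofReal ((2:ℝ) ^ (β * (j:ℝ)) * τ ^ (-(γ/α))) := by
      apply setLIntegral_mono' measurableSet_Ioo
      intro τ hτ
      apply ENNReal.ofReal_le_ofReal
      have h2 : (0:ℝ) ≤ 2 ^ (β * (j:ℝ)) := (Real.rpow_pos_of_pos two_pos _).le
      have hτp : (0:ℝ) ≤ τ ^ (-(γ/α)) := Real.rpow_nonneg hτ.1.le _
      have hexp : Real.exp (-(lam * 2 ^ (α * (j:ℝ)) * (T - τ))) ≤ 1 := by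
        apply Real.exp_le_one_iff.mpr
        have h3 : (0:ℝ) < 2 ^ (α * (j:ℝ)) := Real.rpow_pos_of_pos two_pos _
        have h4 : 0 < T - τ := by linarith [hτ.2]
        have h5 : 0 ≤ lam * 2 ^ (α * (j:ℝ)) * (T - τ) := by positivity
        linarith
      calc (2:ℝ) ^ (β * (j:ℝ)) * Real.exp (-(lam * 2 ^ (α * (j:ℝ)) * (T - τ))) * τ ^ (-(γ/α))
          ≤ 2 ^ (β * (j:ℝ)) * 1 * τ ^ (-(γ/α)) := by
            apply mul_le_mul_of_nonneg_right _ hτp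
            exact mul_le_mul_of_nonneg_left hexp h2
        _ = 2 ^ (β * (j:ℝ)) * τ ^ (-(γ/α)) := by ring
    refine step.trans ?_
    rw [lint_ofReal_const_mul (Real.rpow_pos_of_pos two_pos _).le,
      rpow_lintegral hb0 hb1 hT,
      ← ENNReal.ofReal_mul (Real.rpow_pos_of_pos two_pos _).le]
  -- large bound
  have hpow : ∀ j : ℤ, (2:ℝ) ^ (β * (j:ℝ)) * ((2:ℝ) ^ (α * (j:ℝ)))^(-θ) =
      2 ^ ((β - α*θ) * (j:ℝ)) := by
    intro j
    rw [← Real.rpow_mul (by norm_num : (0:ℝ) ≤ 2), ← Real.rpow_add two_pos]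
    congr 1; ring
  have hlarge : ∀ j : ℤ, M j ≤
      ENNReal.ofReal ((2:ℝ) ^ ((β - α*θ) * (j:ℝ)) *
        (lam^(-θ) * ((2/(1-θ) + 2/(1-γ/α)) * T ^ (1-θ-γ/α)))) := by
    intro j
    have h2j : (0:ℝ) < 2 ^ (α * (j:ℝ)) := Real.rpow_pos_of_pos two_pos _
    have step : M j ≤ ∫⁻ τ in Ioo (0:ℝ) T,
        ENNReal.ofReal ((2 ^ ((β - α*θ) * (j:ℝ)) * lam^(-θ)) *
          ((T - τ) ^ (-θ) * τ ^ (-(γ/α)))) := by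
      apply setLIntegral_mono' measurableSet_Ioo
      intro τ hτ
      apply ENNReal.ofReal_le_ofReal
      have hTτ : (0:ℝ) < T - τ := by linarith [hτ.2]
      have hx : 0 < lam * 2 ^ (α * (j:ℝ)) * (T - τ) := by positivity
      have hexp := exp_neg_le_rpow hθ0 hθ1.le hx
      have hτp : (0:ℝ) ≤ τ ^ (-(γ/α)) := Real.rpow_nonneg hτ.1.le _
      calc (2:ℝ) ^ (β * (j:ℝ)) * Real.exp (-(lam * 2 ^ (α * (j:ℝ)) * (T - τ))) * τ ^ (-(γ/α))
          ≤ 2 ^ (β * (j:ℝ)) * (lam * 2 ^ (α * (j:ℝ)) * (T - τ)) ^ (-θ) * τ ^ (-(γ/α)) := by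
            apply mul_le_mul_of_nonneg_right _ hτp
            exact mul_le_mul_of_nonneg_left hexp (Real.rpow_pos_of_pos two_pos _).le
        _ = 2 ^ (β * (j:ℝ)) * (lam ^ (-θ) * ((2:ℝ) ^ (α * (j:ℝ)))^(-θ) * (T - τ) ^ (-θ)) *
              τ ^ (-(γ/α)) := by
            rw [Real.mul_rpow (mul_nonneg hlam.le h2j.le) hTτ.le,
              Real.mul_rpow hlam.le h2j.le]
        _ = ((2:ℝ) ^ (β * (j:ℝ)) * ((2:ℝ) ^ (α * (j:ℝ)))^(-θ)) * lam ^ (-θ) *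
              ((T - τ) ^ (-θ) * τ ^ (-(γ/α))) := by ring
        _ = (2 ^ ((β - α*θ) * (j:ℝ)) * lam^(-θ)) * ((T - τ) ^ (-θ) * τ ^ (-(γ/α))) := by
            rw [hpow j]
    refine step.trans ?_
    have hc : (0:ℝ) ≤ 2 ^ ((β - α*θ) * (j:ℝ)) * lam^(-θ) :=
      mul_nonneg (Real.rpow_pos_of_pos two_pos _).le (Real.rpow_pos_of_pos hlam _).le
    rw [lint_ofReal_const_mul hc]
    calc ENNReal.ofReal (2 ^ ((β - α*θ) * (j:ℝ)) * lam^(-θ)) *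
          ∫⁻ τ in Ioo (0:ℝ) T, ENNReal.ofReal ((T - τ) ^ (-θ) * τ ^ (-(γ/α)))
        ≤ ENNReal.ofReal (2 ^ ((β - α*θ) * (j:ℝ)) * lam^(-θ)) *
          ENNReal.ofReal ((2/(1-θ) + 2/(1-γ/α)) * T ^ (1-θ-γ/α)) := by
          exact mul_le_mul_right (beta_bound hθ0.le hθ1 hb0 hb1 hT) _
      _ = ENNReal.ofReal ((2:ℝ) ^ ((β - α*θ) * (j:ℝ)) *
          (lam^(-θ) * ((2/(1-θ) + 2/(1-γ/α)) * T ^ (1-θ-γ/α)))) := by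
          rw [← ENNReal.ofReal_mul hc]
          congr 1; ring
  -- pivot
  set L : ℝ := Real.logb 2 T with hL
  set j₀ : ℤ := ⌈(-L)/α⌉ with hj₀
  have h2L : (2:ℝ) ^ L = T := Real.rpow_logb two_pos (by norm_num) hT
  have hceil1 : -L ≤ α * (j₀:ℝ) := by
    have h := Int.le_ceil ((-L)/α)
    rw [div_le_iff₀ hα] at h
    have : -L ≤ (j₀:ℝ) * α := h
    linarith [this]
  have hceil2 : α * (j₀:ℝ) ≤ -L + α := by
    have h := Int.ceil_lt_add_one ((-L)/α)
    have h' : (j₀:ℝ) - 1 ≤ (-L)/α := by linarith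
    rw [le_div_iff₀ hα] at h'
    nlinarith
  have hsmall_pivot : (2:ℝ) ^ (β * (j₀:ℝ)) ≤ T ^ (-(β/α)) * 2 ^ β := by
    have e1 : β * (j₀:ℝ) ≤ L * (-(β/α)) + β := by
      have e0 : β * (j₀:ℝ) = (β/α) * (α * (j₀:ℝ)) := by field_simp
      have e2 : (β/α) * (α * (j₀:ℝ)) ≤ (β/α) * (-L + α) :=
        mul_le_mul_of_nonneg_left hceil2 hβα0.le
      have e3 : (β/α) * (-L + α) = L * (-(β/α)) + β := by field_simp
      linarith [e0 ▸ e2, e3 ▸ e2]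
    calc (2:ℝ) ^ (β * (j₀:ℝ)) ≤ 2 ^ (L * (-(β/α)) + β) :=
          Real.rpow_le_rpow_of_exponent_le one_le_two e1
      _ = (2 ^ L) ^ (-(β/α)) * 2 ^ β := by
          rw [Real.rpow_add two_pos, Real.rpow_mul (by norm_num : (0:ℝ) ≤ 2)]
      _ = T ^ (-(β/α)) * 2 ^ β := by rw [h2L]
  have hlarge_pivot : (2:ℝ) ^ ((β - α*θ) * (j₀:ℝ)) ≤ T ^ (θ - β/α) := by
    have e1 : (β - α*θ) * (j₀:ℝ) ≤ L * (θ - β/α) := by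
      have e0 : (β - α*θ) * (j₀:ℝ) = ((β - α*θ)/α) * (α * (j₀:ℝ)) := by field_simp
      have e2 : ((β - α*θ)/α) * (α * (j₀:ℝ)) ≤ ((β - α*θ)/α) * (-L) :=
        mul_le_mul_of_nonpos_left hceil1 (div_nonpos_iff.mpr (Or.inr ⟨hδ.le, hα.le⟩))
      have e3 : ((β - α*θ)/α) * (-L) = L * (θ - β/α) := by field_simp; ring
      linarith [e0 ▸ e2, e3 ▸ e2]
    calc (2:ℝ) ^ ((β - α*θ) * (j₀:ℝ)) ≤ 2 ^ (L * (θ - β/α)) :=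
          Real.rpow_le_rpow_of_exponent_le one_le_two e1
      _ = (2 ^ L) ^ (θ - β/α) := Real.rpow_mul (by norm_num : (0:ℝ) ≤ 2) _ _
      _ = T ^ (θ - β/α) := by rw [h2L]
  -- split the integer sum
  have hsum_eq : (∑' j : ℤ, M j) =
      (∑' n : ℕ, M ((n:ℤ) + j₀)) + ∑' n : ℕ, M (-((n:ℤ)+1) + j₀) := by
    rw [← Equiv.tsum_eq (Equiv.addRight j₀) M]
    exact tsum_of_nat_of_neg_add_one ENNReal.summable ENNReal.summable
  set W : ℝ := lam^(-θ) * ((2/(1-θ) + 2/(1-γ/α)) * T ^ (1-θ-γ/α)) with hW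
  have hW0 : 0 ≤ W := by
    apply mul_nonneg (Real.rpow_pos_of_pos hlam _).le
    exact mul_nonneg hCb.le (Real.rpow_pos_of_pos hT _).le
  set K1 : ℝ := T ^ (1-γ/α) / (1-γ/α) with hK1
  have hK10 : 0 ≤ K1 := div_nonneg (Real.rpow_pos_of_pos hT _).le (by linarith)
  -- large-side geometric sum
  have hlarge_sum : (∑' n : ℕ, M ((n:ℤ) + j₀)) ≤
      ENNReal.ofReal ((2 ^ ((β - α*θ) * (j₀:ℝ)) * W) / (1 - 2 ^ (β - α*θ))) := by
    rw [← geo_tsum (mul_nonneg (Real.rpow_pos_of_pos two_pos _).le hW0) hq2'.le hq2]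
    apply ENNReal.tsum_le_tsum
    intro n
    refine (hlarge ((n:ℤ) + j₀)).trans (le_of_eq ?_)
    congr 1
    have hcast : (((n:ℤ) + j₀ : ℤ) : ℝ) = (n:ℝ) + (j₀:ℝ) := by push_cast; ring
    rw [hcast, show (β - α*θ) * ((n:ℝ) + (j₀:ℝ)) =
        (β - α*θ) * (j₀:ℝ) + (β - α*θ) * (n:ℝ) by ring,
      Real.rpow_add two_pos,
      Real.rpow_mul (by norm_num : (0:ℝ) ≤ 2) (β - α*θ) (n:ℝ),
      Real.rpow_natCast]
    ring
  -- small-side geometric sum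
  have hsmall_sum : (∑' n : ℕ, M (-((n:ℤ)+1) + j₀)) ≤
      ENNReal.ofReal ((2 ^ (β * (j₀:ℝ)) * 2 ^ (-β) * K1) / (1 - 2 ^ (-β))) := by
    rw [← geo_tsum (mul_nonneg (mul_nonneg (Real.rpow_pos_of_pos two_pos _).le hq1'.le) hK10)
      hq1'.le hq1]
    apply ENNReal.tsum_le_tsum
    intro n
    refine (hsmall (-((n:ℤ)+1) + j₀)).trans (le_of_eq ?_)
    congr 1
    have hcast : ((-((n:ℤ)+1) + j₀ : ℤ) : ℝ) = (j₀:ℝ) - ((n:ℝ) + 1) := by push_cast; ring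
    rw [hcast, show β * ((j₀:ℝ) - ((n:ℝ) + 1)) =
        (β * (j₀:ℝ) + -β) + (-β) * (n:ℝ) by ring,
      Real.rpow_add two_pos, Real.rpow_add two_pos,
      Real.rpow_mul (by norm_num : (0:ℝ) ≤ 2) (-β) (n:ℝ),
      Real.rpow_natCast]
    ring
  -- combine
  rw [hsum_eq]
  refine le_trans (add_le_add hlarge_sum hsmall_sum) ?_
  rw [← ENNReal.ofReal_add
    (div_nonneg (mul_nonneg (Real.rpow_pos_of_pos two_pos _).le hW0) (by linarith))
    (div_nonneg (mul_nonneg (mul_nonneg (Real.rpow_pos_of_pos two_pos _).le hq1'.le) hK10)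
      (by linarith))]
  apply ENNReal.ofReal_le_ofReal
  -- final real arithmetic
  have hTpow1 : T ^ (θ - β/α) * T ^ (1-θ-γ/α) = T ^ (1 - β/α - γ/α) := by
    rw [← Real.rpow_add hT]; congr 1; ring
  have hTpow2 : T ^ (-(β/α)) * T ^ (1-γ/α) = T ^ (1 - β/α - γ/α) := by
    rw [← Real.rpow_add hT]; congr 1; ring
  have h2ββ : (2:ℝ) ^ β * 2 ^ (-β) = 1 := by
    rw [← Real.rpow_add two_pos]; simp
  have hbig : (2 ^ ((β - α*θ) * (j₀:ℝ)) * W) / (1 - 2 ^ (β - α*θ)) ≤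
      lam^(-θ) * (2/(1-θ) + 2/(1-γ/α)) / (1-2^(β-α*θ)) * T ^ (1 - β/α - γ/α) := by
    have step : 2 ^ ((β - α*θ) * (j₀:ℝ)) * W ≤ T ^ (θ - β/α) * W :=
      mul_le_mul_of_nonneg_right hlarge_pivot hW0
    refine ((div_le_div_iff_of_pos_right (by linarith : (0:ℝ) < 1 - 2 ^ (β - α*θ))).mpr step).trans
      (le_of_eq ?_)
    rw [hW, show T ^ (θ - β/α) * (lam ^ (-θ) * ((2/(1-θ) + 2/(1-γ/α)) * T ^ (1-θ-γ/α))) =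
        (lam ^ (-θ) * (2/(1-θ) + 2/(1-γ/α))) * (T ^ (θ - β/α) * T ^ (1-θ-γ/α)) by ring,
      hTpow1]
    ring
  have hsml : (2 ^ (β * (j₀:ℝ)) * 2 ^ (-β) * K1) / (1 - 2 ^ (-β)) ≤
      ((1-γ/α)*(1-2^(-β)))⁻¹ * T ^ (1 - β/α - γ/α) := by
    have step : 2 ^ (β * (j₀:ℝ)) * 2 ^ (-β) * K1 ≤ (T ^ (-(β/α)) * 2 ^ β) * 2 ^ (-β) * K1 :=
      mul_le_mul_of_nonneg_right (mul_le_mul_of_nonneg_right hsmall_pivot hq1'.le) hK10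
    refine ((div_le_div_iff_of_pos_right (by linarith : (0:ℝ) < 1 - 2 ^ (-β))).mpr step).trans
      (le_of_eq ?_)
    rw [hK1, show (T ^ (-(β/α)) * 2 ^ β) * 2 ^ (-β) * (T ^ (1-γ/α) / (1-γ/α)) =
        ((2:ℝ) ^ β * 2 ^ (-β)) * ((T ^ (-(β/α)) * T ^ (1-γ/α)) / (1-γ/α)) by ring,
      h2ββ, hTpow2]
    rw [mul_inv, one_mul]
    ring
  calc (2 ^ ((β - α*θ) * (j₀:ℝ)) * W) / (1 - 2 ^ (β - α*θ)) +
        (2 ^ (β * (j₀:ℝ)) * 2 ^ (-β) * K1) / (1 - 2 ^ (-β))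
      ≤ lam^(-θ) * (2/(1-θ) + 2/(1-γ/α)) / (1-2^(β-α*θ)) * T ^ (1 - β/α - γ/α) +
        ((1-γ/α)*(1-2^(-β)))⁻¹ * T ^ (1 - β/α - γ/α) := add_le_add hbig hsml
    _ = (((1-γ/α)*(1-2^(-β)))⁻¹ + lam^(-θ) * (2/(1-θ) + 2/(1-γ/α)) / (1-2^(β-α*θ))) *
        T ^ (1 - β/α - γ/α) := by ring
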